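/- Let x₁ < ... < xₙ, n ≥ 3, wᵢ ∈ (0,1/2), Σwᵢ = 1. At any critical point (â,γ̂) of L(a,γ) = Σᵢ wᵢ log((xᵢ-a)² + γ²) − log γ with γ̂ > 0, the Hessian determinant of L is strictly positive; consequently every critical point is a strict local minimizer. -/

import Mathlib

open Finset Real

/-- The weighted negative log-likelihood of the Cauchy distribution. -/
noncomputable def cauchyNLL (n : ℕ) (x w : Fin n → ℝ) (a γ : ℝ) : ℝ :=
  (∑ i, w i * Real.log ((x i - a) ^ 2 + γ ^ 2)) - Real.log γ

set_option maxHeartbeats 1000000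

section AuxLemmas

open ContinuousLinearMap

lemma lagrange_pos {n : ℕ} (u p q : Fin n → ℝ) (hu : ∀ i, 0 ≤ u i)
    (i0 j0 : Fin n) (hui : 0 < u i0) (huj : 0 < u j0)
    (hne : p i0 * q j0 ≠ p j0 * q i0) :
    0 < (∑ i, u i * p i ^ 2) * (∑ i, u i * q i ^ 2) - (∑ i, u i * (p i * q i)) ^ 2 := by
  have key : 2 * ((∑ i, u i * p i ^ 2) * (∑ i, u i * q i ^ 2)
      - (∑ i, u i * (p i * q i)) ^ 2)
      = ∑ i, ∑ j, u i * u j * (p i * q j - p j * q i) ^ 2 := by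
    have e : ∀ i j : Fin n, u i * u j * (p i * q j - p j * q i) ^ 2
        = (u i * p i ^ 2) * (u j * q j ^ 2) + (u j * p j ^ 2) * (u i * q i ^ 2)
          - 2 * ((u i * (p i * q i)) * (u j * (p j * q j))) := fun i j => by ring
    simp only [e, Finset.sum_sub_distrib, Finset.sum_add_distrib, ← Finset.sum_mul,
      ← Finset.mul_sum]
    ring
  have hpos : 0 < ∑ i, ∑ j, u i * u j * (p i * q j - p j * q i) ^ 2 := by
    refine Finset.sum_pos' (fun i _ => Finset.sum_nonneg fun j _ =>
      mul_nonneg (mul_nonneg (hu i) (hu j)) (sq_nonneg _)) ⟨i0, mem_univ _, ?_⟩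
    refine Finset.sum_pos' (fun j _ => mul_nonneg (mul_nonneg (hu i0) (hu j)) (sq_nonneg _))
      ⟨j0, mem_univ _, ?_⟩
    have : p i0 * q j0 - p j0 * q i0 ≠ 0 := sub_ne_zero.mpr hne
    exact mul_pos (mul_pos hui huj) (by positivity)
  linarith

lemma det_pos (n : ℕ) (hn : 3 ≤ n) (x : Fin n → ℝ)
    (hx : StrictMono x) (w : Fin n → ℝ) (hw : ∀ i, 0 < w i)
    (hw1 : ∑ i, w i = 1) (ahat γ' : ℝ) (hγ' : 0 < γ')
    (hcrit_a : (∑ i, w i * (x i - ahat) / ((x i - ahat) ^ 2 + γ' ^ 2)) = 0)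
    (hcrit_γ : (∑ i, w i * γ' ^ 2 / ((x i - ahat) ^ 2 + γ' ^ 2)) = 1 / 2) :
    0 < (-2 * ∑ i, w i * ((x i - ahat) ^ 2 - γ' ^ 2) / ((x i - ahat) ^ 2 + γ' ^ 2) ^ 2) *
          (2 * (∑ i, w i * ((x i - ahat) ^ 2 - γ' ^ 2) / ((x i - ahat) ^ 2 + γ' ^ 2) ^ 2)
            + 1 / γ' ^ 2) -
        (4 * ∑ i, w i * (γ' * (x i - ahat)) / ((x i - ahat) ^ 2 + γ' ^ 2) ^ 2) ^ 2 := by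
  obtain ⟨a, ha⟩ : ∃ a : Fin n → ℝ, a = fun i => x i - ahat := ⟨_, rfl⟩
  obtain ⟨d, hdd⟩ : ∃ d : Fin n → ℝ, d = fun i => (a i) ^ 2 + γ' ^ 2 := ⟨_, rfl⟩
  obtain ⟨u, hu⟩ : ∃ u : Fin n → ℝ, u = fun i => w i / (d i) ^ 2 := ⟨_, rfl⟩
  obtain ⟨p, hp⟩ : ∃ p : Fin n → ℝ, p = fun i => (a i) ^ 2 - γ' ^ 2 := ⟨_, rfl⟩
  have hd : ∀ i, 0 < d i := fun i => by rw [hdd]; positivity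
  obtain ⟨R1, hR1def⟩ : ∃ r : ℝ, r = ∑ i, w i / d i := ⟨_, rfl⟩
  obtain ⟨R2, hR2def⟩ : ∃ r : ℝ, r = ∑ i, w i / (d i) ^ 2 := ⟨_, rfl⟩
  obtain ⟨E, hEdef⟩ : ∃ r : ℝ, r = ∑ i, w i * a i / (d i) ^ 2 := ⟨_, rfl⟩
  have hca : (∑ i, w i * a i / d i) = 0 := by
    rw [← hcrit_a]; exact Finset.sum_congr rfl fun i _ => by rw [hdd, ha]
  have hR1 : γ' ^ 2 * R1 = 1 / 2 := by
    rw [hR1def, Finset.mul_sum, ← hcrit_γ]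
    exact Finset.sum_congr rfl fun i _ => by rw [hdd, ha]; ring
  have hA : (∑ i, u i * p i ^ 2) = 4 * γ' ^ 4 * R2 - 1 := by
    have e : (∑ i, u i * p i ^ 2)
        = ∑ i, (w i - 4 * γ' ^ 2 * (w i / d i) + 4 * γ' ^ 4 * (w i / (d i) ^ 2)) :=
      Finset.sum_congr rfl fun i _ => by
        have h0 := (hd i).ne'
        rw [hu, hp]; simp only
        rw [hdd] at h0 ⊢; simp only at h0 ⊢
        field_simp; ring
    rw [e, Finset.sum_add_distrib, Finset.sum_sub_distrib, ← Finset.mul_sum,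
      ← Finset.mul_sum, hw1, ← hR1def, ← hR2def]
    nlinarith [hR1]
  have hB : (∑ i, u i * a i ^ 2) = R1 - γ' ^ 2 * R2 := by
    have e : (∑ i, u i * a i ^ 2)
        = ∑ i, (w i / d i - γ' ^ 2 * (w i / (d i) ^ 2)) :=
      Finset.sum_congr rfl fun i _ => by
        have h0 := (hd i).ne'
        rw [hu]; simp only
        rw [hdd] at h0 ⊢; simp only at h0 ⊢
        field_simp; ring
    rw [e, Finset.sum_sub_distrib, ← Finset.mul_sum, ← hR1def, ← hR2def]
  have hC : (∑ i, u i * (p i * a i)) = -2 * γ' ^ 2 * E := by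
    have e : (∑ i, u i * (p i * a i))
        = ∑ i, (w i * a i / d i - 2 * γ' ^ 2 * (w i * a i / (d i) ^ 2)) :=
      Finset.sum_congr rfl fun i _ => by
        have h0 := (hd i).ne'
        rw [hu, hp]; simp only
        rw [hdd] at h0 ⊢; simp only at h0 ⊢
        field_simp; ring
    rw [e, Finset.sum_sub_distrib, ← Finset.mul_sum, hca, hEdef]
    ring
  have hS : (∑ i, w i * ((x i - ahat) ^ 2 - γ' ^ 2) / ((x i - ahat) ^ 2 + γ' ^ 2) ^ 2)
      = R1 - 2 * γ' ^ 2 * R2 := by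
    have e : (∑ i, w i * ((x i - ahat) ^ 2 - γ' ^ 2) / ((x i - ahat) ^ 2 + γ' ^ 2) ^ 2)
        = ∑ i, (w i / d i - 2 * γ' ^ 2 * (w i / (d i) ^ 2)) :=
      Finset.sum_congr rfl fun i _ => by
        have h0 := (hd i).ne'
        rw [hdd, ha] at h0 ⊢; simp only at h0 ⊢
        field_simp; ring
    rw [e, Finset.sum_sub_distrib, ← Finset.mul_sum, ← hR1def, ← hR2def]
  have hT : (∑ i, w i * (γ' * (x i - ahat)) / ((x i - ahat) ^ 2 + γ' ^ 2) ^ 2) = γ' * E := by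
    rw [hEdef, Finset.mul_sum]
    refine Finset.sum_congr rfl fun i _ => by rw [hdd, ha]; simp only; ring
  have h2n : 2 < n := hn
  have h1n : 1 < n := by omega
  have h0n : 0 < n := by omega
  have ha01 : a ⟨0, h0n⟩ < a ⟨1, h1n⟩ := by
    have := hx (show (⟨0, h0n⟩ : Fin n) < ⟨1, h1n⟩ by simp [Fin.lt_def])
    rw [ha]; simp only; linarith
  have ha12 : a ⟨1, h1n⟩ < a ⟨2, h2n⟩ := by
    have := hx (show (⟨1, h1n⟩ : Fin n) < ⟨2, h2n⟩ by simp [Fin.lt_def])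
    rw [ha]; simp only; linarith
  have hpair : ∃ i0 j0 : Fin n, p i0 * a j0 ≠ p j0 * a i0 := by
    set A0 := a ⟨0, h0n⟩; set A1 := a ⟨1, h1n⟩; set A2 := a ⟨2, h2n⟩
    by_cases h01 : A0 * A1 = -γ' ^ 2
    · by_cases h12 : A1 * A2 = -γ' ^ 2
      · exfalso
        have h1z : A1 = 0 := by
          have hz : A1 * (A0 - A2) = 0 := by nlinarith [h01, h12]
          rcases mul_eq_zero.mp hz with h | h
          · exact h
          · nlinarith [ha01, ha12]
        nlinarith [hγ']
      · refine ⟨⟨1, h1n⟩, ⟨2, h2n⟩, fun h => h12 ?_⟩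
        rw [hp] at h; simp only at h
        have hz : (A1 - A2) * (A1 * A2 + γ' ^ 2) = 0 := by nlinarith [h]
        rcases mul_eq_zero.mp hz with h' | h'
        · exfalso; nlinarith [ha12]
        · linarith [h']
    · refine ⟨⟨0, h0n⟩, ⟨1, h1n⟩, fun h => h01 ?_⟩
      rw [hp] at h; simp only at h
      have hz : (A0 - A1) * (A0 * A1 + γ' ^ 2) = 0 := by nlinarith [h]
      rcases mul_eq_zero.mp hz with h' | h'
      · exfalso; nlinarith [ha01]
      · linarith [h']
  obtain ⟨i0, j0, hne⟩ := hpair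
  have hupos : ∀ i, 0 < u i := fun i => by
    have h1 := hd i; have h2 := hw i; rw [hu]; positivity
  have hCS := lagrange_pos u p a (fun i => (hupos i).le) i0 j0 (hupos i0) (hupos j0) hne
  rw [hA, hB, hC] at hCS
  rw [hS, hT]
  have h2 : γ' ^ 2 * (1 / γ' ^ 2) = 1 := by field_simp
  have key : γ' ^ 2 * ((-2 * (R1 - 2 * γ' ^ 2 * R2)) * (2 * (R1 - 2 * γ' ^ 2 * R2) + 1 / γ' ^ 2)
      - (4 * (γ' * E)) ^ 2)
      = 4 * ((4 * γ' ^ 4 * R2 - 1) * (R1 - γ' ^ 2 * R2) - (-2 * γ' ^ 2 * E) ^ 2) := by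
    linear_combination (-2 * (R1 - 2 * γ' ^ 2 * R2)) * h2 + (-4 * R1) * hR1
  nlinarith [key, hCS, mul_pos hγ' hγ']

lemma hasD (c ahat γ' : ℝ) :
    HasFDerivAt (fun q : ℝ × ℝ => (c - q.1)^2 + q.2^2)
      ((2*(ahat - c)) • ContinuousLinearMap.fst ℝ ℝ ℝ + (2*γ') • ContinuousLinearMap.snd ℝ ℝ ℝ)
      (ahat, γ') := by
  have h0 : (fun q : ℝ × ℝ => (c - q.1)^2 + q.2^2)
      = fun q : ℝ × ℝ => (c - q.1)*(c - q.1) + q.2*q.2 := funext fun q => by ring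
  rw [h0]
  have h1 : HasFDerivAt (fun q : ℝ × ℝ => c - q.1)
      ((0 : (ℝ×ℝ) →L[ℝ] ℝ) - ContinuousLinearMap.fst ℝ ℝ ℝ) (ahat, γ') :=
    (hasFDerivAt_const c _).sub hasFDerivAt_fst
  have h2 : HasFDerivAt (fun q : ℝ × ℝ => q.2) (ContinuousLinearMap.snd ℝ ℝ ℝ) (ahat, γ') :=
    hasFDerivAt_snd
  have := (h1.fun_mul h1).fun_add (h2.fun_mul h2)
  refine this.congr_fderiv ?_; symm
  refine ContinuousLinearMap.ext fun v => ?_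
  simp; ring

lemma hasInv (c ahat γ' : ℝ) (hγ' : 0 < γ') :
    HasFDerivAt (fun q : ℝ × ℝ => ((c - q.1)^2 + q.2^2)⁻¹)
      ((-(mulLeftRight ℝ ℝ ((c - ahat)^2 + γ'^2)⁻¹ ((c - ahat)^2 + γ'^2)⁻¹)).comp
        ((2*(ahat - c)) • ContinuousLinearMap.fst ℝ ℝ ℝ + (2*γ') • ContinuousLinearMap.snd ℝ ℝ ℝ))
      (ahat, γ') := by
  have hne : ((c - ahat)^2 + γ'^2) ≠ 0 := by positivity
  exact (hasFDerivAt_inv' (𝕜 := ℝ) hne).comp (ahat, γ') (hasD c ahat γ')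

lemma term1 (c wi ahat γ' : ℝ) (hγ' : 0 < γ') :
    HasFDerivAt
      (fun q : ℝ × ℝ => wi * ((2*(q.1 - c)) * (((c - q.1)^2 + q.2^2)⁻¹)))
      ((wi * (-2*((c - ahat)^2 - γ'^2) / ((c - ahat)^2 + γ'^2)^2)) • ContinuousLinearMap.fst ℝ ℝ ℝ
        + (wi * (4*γ'*(c - ahat) / ((c - ahat)^2 + γ'^2)^2)) • ContinuousLinearMap.snd ℝ ℝ ℝ)
      (ahat, γ') := by
  have h0 : ((c - ahat)^2 + γ'^2) ≠ 0 := by positivity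
  have hN : HasFDerivAt (fun q : ℝ × ℝ => 2*(q.1 - c))
      ((2:ℝ) • ContinuousLinearMap.fst ℝ ℝ ℝ) (ahat, γ') :=
    (hasFDerivAt_fst.sub_const c).const_mul 2
  have h := (hN.fun_mul (hasInv c ahat γ' hγ')).const_mul wi
  refine h.congr_fderiv ?_; symm
  refine ContinuousLinearMap.ext fun v => ?_
  simp only [ContinuousLinearMap.add_apply, ContinuousLinearMap.smul_apply,
    ContinuousLinearMap.coe_fst', ContinuousLinearMap.coe_snd', smul_eq_mul,
    ContinuousLinearMap.comp_apply, ContinuousLinearMap.neg_apply, mulLeftRight_apply,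
    ContinuousLinearMap.smulRight_apply]
  field_simp
  ring

lemma term2 (c wi ahat γ' : ℝ) (hγ' : 0 < γ') :
    HasFDerivAt
      (fun q : ℝ × ℝ => wi * ((2*q.2) * (((c - q.1)^2 + q.2^2)⁻¹)))
      ((wi * (4*γ'*(c - ahat) / ((c - ahat)^2 + γ'^2)^2)) • ContinuousLinearMap.fst ℝ ℝ ℝ
        + (wi * (2*((c - ahat)^2 - γ'^2) / ((c - ahat)^2 + γ'^2)^2)) • ContinuousLinearMap.snd ℝ ℝ ℝ)
      (ahat, γ') := by
  have h0 : ((c - ahat)^2 + γ'^2) ≠ 0 := by positivity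
  have hN : HasFDerivAt (fun q : ℝ × ℝ => 2*q.2)
      ((2:ℝ) • ContinuousLinearMap.snd ℝ ℝ ℝ) (ahat, γ') :=
    hasFDerivAt_snd.const_mul 2
  have h := (hN.fun_mul (hasInv c ahat γ' hγ')).const_mul wi
  refine h.congr_fderiv ?_; symm
  refine ContinuousLinearMap.ext fun v => ?_
  simp only [ContinuousLinearMap.add_apply, ContinuousLinearMap.smul_apply,
    ContinuousLinearMap.coe_fst', ContinuousLinearMap.coe_snd', smul_eq_mul,
    ContinuousLinearMap.comp_apply, ContinuousLinearMap.neg_apply, mulLeftRight_apply,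
    ContinuousLinearMap.smulRight_apply]
  field_simp
  ring

noncomputable def gradC (n : ℕ) (x w : Fin n → ℝ) (q : ℝ × ℝ) : ℝ × ℝ :=
  (∑ i, w i * ((2*(q.1 - x i)) * (((x i - q.1)^2 + q.2^2)⁻¹)),
   (∑ i, w i * ((2*q.2) * (((x i - q.1)^2 + q.2^2)⁻¹))) - (q.2)⁻¹)

noncomputable def hessC (n : ℕ) (x w : Fin n → ℝ) (ahat γ' : ℝ) : (ℝ×ℝ) →L[ℝ] (ℝ×ℝ) :=
  (((-2 * ∑ i, w i * ((x i - ahat)^2 - γ'^2) / ((x i - ahat)^2 + γ'^2)^2) • ContinuousLinearMap.fst ℝ ℝ ℝ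
    + (4 * ∑ i, w i * (γ' * (x i - ahat)) / ((x i - ahat)^2 + γ'^2)^2) • ContinuousLinearMap.snd ℝ ℝ ℝ).prod
  ((4 * ∑ i, w i * (γ' * (x i - ahat)) / ((x i - ahat)^2 + γ'^2)^2) • ContinuousLinearMap.fst ℝ ℝ ℝ
    + (2 * (∑ i, w i * ((x i - ahat)^2 - γ'^2) / ((x i - ahat)^2 + γ'^2)^2) + 1/γ'^2) • ContinuousLinearMap.snd ℝ ℝ ℝ))

lemma hasGrad (n : ℕ) (x w : Fin n → ℝ) (ahat γ' : ℝ) (hγ' : 0 < γ') :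
    HasFDerivAt (gradC n x w) (hessC n x w ahat γ') (ahat, γ') := by
  refine HasFDerivAt.prodMk ?_ ?_
  · have hsum := HasFDerivAt.fun_sum (fun i (_ : i ∈ Finset.univ) => term1 (x i) (w i) ahat γ' hγ')
    convert hsum using 1
    refine ContinuousLinearMap.ext fun v => ?_
    rw [ContinuousLinearMap.sum_apply]
    simp only [ContinuousLinearMap.add_apply, ContinuousLinearMap.smul_apply,
      ContinuousLinearMap.coe_fst', ContinuousLinearMap.coe_snd', smul_eq_mul]
    rw [Finset.sum_add_distrib, ← Finset.sum_mul, ← Finset.sum_mul]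
    have e1 : ∑ i, w i * (-2*((x i - ahat)^2 - γ'^2) / ((x i - ahat)^2 + γ'^2)^2)
        = -2 * ∑ i, w i * ((x i - ahat)^2 - γ'^2) / ((x i - ahat)^2 + γ'^2)^2 := by
      rw [Finset.mul_sum]; exact Finset.sum_congr rfl fun i _ => by ring
    have e2 : ∑ i, w i * (4*γ'*(x i - ahat) / ((x i - ahat)^2 + γ'^2)^2)
        = 4 * ∑ i, w i * (γ' * (x i - ahat)) / ((x i - ahat)^2 + γ'^2)^2 := by
      rw [Finset.mul_sum]; exact Finset.sum_congr rfl fun i _ => by ring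
    rw [e1, e2]
  · have hsum := HasFDerivAt.fun_sum (fun i (_ : i ∈ Finset.univ) => term2 (x i) (w i) ahat γ' hγ')
    have hinv : HasFDerivAt (fun q : ℝ × ℝ => (q.2)⁻¹)
        ((-(mulLeftRight ℝ ℝ γ'⁻¹ γ'⁻¹)).comp (ContinuousLinearMap.snd ℝ ℝ ℝ)) (ahat, γ') :=
      (hasFDerivAt_inv' (𝕜 := ℝ) hγ'.ne').comp (ahat, γ') hasFDerivAt_snd
    have h := hsum.fun_sub hinv
    convert h using 1
    refine ContinuousLinearMap.ext fun v => ?_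
    rw [ContinuousLinearMap.sub_apply, ContinuousLinearMap.sum_apply]
    simp only [ContinuousLinearMap.add_apply, ContinuousLinearMap.smul_apply,
      ContinuousLinearMap.coe_fst', ContinuousLinearMap.coe_snd', smul_eq_mul,
      ContinuousLinearMap.comp_apply, ContinuousLinearMap.neg_apply, mulLeftRight_apply]
    rw [Finset.sum_add_distrib, ← Finset.sum_mul, ← Finset.sum_mul]
    have e2 : ∑ i, w i * (4*γ'*(x i - ahat) / ((x i - ahat)^2 + γ'^2)^2)
        = 4 * ∑ i, w i * (γ' * (x i - ahat)) / ((x i - ahat)^2 + γ'^2)^2 := by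
      rw [Finset.mul_sum]; exact Finset.sum_congr rfl fun i _ => by ring
    have e3 : ∑ i, w i * (2*((x i - ahat)^2 - γ'^2) / ((x i - ahat)^2 + γ'^2)^2)
        = 2 * ∑ i, w i * ((x i - ahat)^2 - γ'^2) / ((x i - ahat)^2 + γ'^2)^2 := by
      rw [Finset.mul_sum]; exact Finset.sum_congr rfl fun i _ => by ring
    rw [e2, e3]
    have hv : (1/γ'^2) * v.2 = γ'⁻¹ * v.2 * γ'⁻¹ := by
      rw [one_div, sq, mul_inv]; ring
    linear_combination hv

lemma hasPsi (n : ℕ) (x w : Fin n → ℝ) (ahat γ' v1 v2 t : ℝ)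
    (hpos : 0 < γ' + t*v2) :
    HasDerivAt (fun s => cauchyNLL n x w (ahat + s*v1) (γ' + s*v2))
      ((gradC n x w (ahat + t*v1, γ' + t*v2)).1 * v1
        + (gradC n x w (ahat + t*v1, γ' + t*v2)).2 * v2) t := by
  have hγt : γ' + t*v2 ≠ 0 := hpos.ne'
  have hlin2 : HasDerivAt (fun s : ℝ => γ' + s*v2) v2 t := by
    simpa using ((hasDerivAt_id t).mul_const v2).const_add γ'
  have hlin1 : HasDerivAt (fun s : ℝ => ahat + s*v1) v1 t := by
    simpa using ((hasDerivAt_id t).mul_const v1).const_add ahat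
  have hDi : ∀ i : Fin n, HasDerivAt (fun s => (x i - (ahat + s*v1))^2 + (γ' + s*v2)^2)
      (2*(x i - (ahat + t*v1))*(-v1) + 2*(γ' + t*v2)*v2) t := by
    intro i
    have h1 : HasDerivAt (fun s : ℝ => x i - (ahat + s*v1)) (-v1) t := hlin1.const_sub (x i)
    have h2 := (h1.fun_pow 2).fun_add (hlin2.fun_pow 2)
    refine h2.congr_deriv ?_; symm
    ring
  have hdne : ∀ i : Fin n, ((x i - (ahat + t*v1))^2 + (γ' + t*v2)^2) ≠ 0 := fun i => by positivity
  have hlog : ∀ i : Fin n, HasDerivAt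
      (fun s => w i * Real.log ((x i - (ahat + s*v1))^2 + (γ' + s*v2)^2))
      (w i * ((2*(x i - (ahat + t*v1))*(-v1) + 2*(γ' + t*v2)*v2)
        / ((x i - (ahat + t*v1))^2 + (γ' + t*v2)^2))) t :=
    fun i => (((hDi i).log (hdne i)).const_mul (w i))
  have hsum := HasDerivAt.fun_sum (fun i (_ : i ∈ Finset.univ) => hlog i)
  have hlast : HasDerivAt (fun s => Real.log (γ' + s*v2)) (v2 / (γ' + t*v2)) t :=
    hlin2.log hγt
  have htot := hsum.fun_sub hlast
  have hfun : (fun s => (∑ i, w i * Real.log ((x i - (ahat + s*v1))^2 + (γ' + s*v2)^2))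
      - Real.log (γ' + s*v2)) = fun s => cauchyNLL n x w (ahat + s*v1) (γ' + s*v2) := by
    funext s; simp [cauchyNLL]
  rw [hfun] at htot
  refine htot.congr_deriv ?_; symm
  dsimp only [gradC]
  simp only [Finset.sum_mul, sub_mul]
  rw [← add_sub_assoc, ← Finset.sum_add_distrib]
  congr 1
  · refine Finset.sum_congr rfl fun i _ => ?_
    have h0 := hdne i
    field_simp
    ring
  · exact inv_mul_eq_div _ _

lemma sqnorm_le (v : ℝ × ℝ) : ‖v‖^2 ≤ v.1^2 + v.2^2 := by
  rw [Prod.norm_def, Real.norm_eq_abs, Real.norm_eq_abs]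
  rcases le_total |v.1| |v.2| with h | h
  · rw [sup_eq_right.mpr h]; nlinarith [sq_abs v.2, sq_nonneg v.1]
  · rw [sup_eq_left.mpr h]; nlinarith [sq_abs v.1, sq_nonneg v.2]

lemma strict_local_min (n : ℕ) (x : Fin n → ℝ) (w : Fin n → ℝ)
    (ahat γ' : ℝ) (hγ' : 0 < γ')
    (hcrit_a : (∑ i, w i * (x i - ahat) / ((x i - ahat) ^ 2 + γ' ^ 2)) = 0)
    (hcrit_γ : (∑ i, w i * γ' ^ 2 / ((x i - ahat) ^ 2 + γ' ^ 2)) = 1 / 2)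
    (hdet : 0 < (-2 * ∑ i, w i * ((x i - ahat) ^ 2 - γ' ^ 2) / ((x i - ahat) ^ 2 + γ' ^ 2) ^ 2) *
          (2 * (∑ i, w i * ((x i - ahat) ^ 2 - γ' ^ 2) / ((x i - ahat) ^ 2 + γ' ^ 2) ^ 2)
            + 1 / γ' ^ 2) -
        (4 * ∑ i, w i * (γ' * (x i - ahat)) / ((x i - ahat) ^ 2 + γ' ^ 2) ^ 2) ^ 2) :
    ∃ ε > 0, ∀ a γ : ℝ, dist (a, γ) (ahat, γ') < ε → (a, γ) ≠ (ahat, γ') →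
      cauchyNLL n x w ahat γ' < cauchyNLL n x w a γ := by
  have hγ2 : (0:ℝ) < 1/γ'^2 := by positivity
  obtain ⟨S, hSdef⟩ : ∃ r : ℝ, r = ∑ i, w i * ((x i - ahat) ^ 2 - γ' ^ 2) / ((x i - ahat) ^ 2 + γ' ^ 2) ^ 2 := ⟨_, rfl⟩
  obtain ⟨T, hTdef⟩ : ∃ r : ℝ, r = ∑ i, w i * (γ' * (x i - ahat)) / ((x i - ahat) ^ 2 + γ' ^ 2) ^ 2 := ⟨_, rfl⟩
  rw [← hSdef, ← hTdef] at hdet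
  -- positivity of the (1,1) entry
  have hα : 0 < -2*S := by
    by_contra hcon
    push_neg at hcon
    nlinarith [hdet, sq_nonneg (4*T), hγ2]
  -- coercivity constant
  obtain ⟨c, hcdef⟩ : ∃ c : ℝ, c = ((-2*S) * (2*S + 1/γ'^2) - (4*T)^2) * γ'^2 := ⟨_, rfl⟩
  have hc : 0 < c := by rw [hcdef]; exact mul_pos hdet (by positivity)
  have hcAB : c * (1/γ'^2) = (-2*S) * (2*S + 1/γ'^2) - (4*T)^2 := by
    rw [hcdef]; field_simp
  have hαc : 0 < -2*S - c := by
    have key : (-2*S - c) * (1/γ'^2) = (-2*S)^2 + (4*T)^2 := by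
      linear_combination (-1 : ℝ) * hcAB
    nlinarith [key, hγ2, mul_pos hα hα, sq_nonneg (4*T)]
  have hQ : ∀ v1 v2 : ℝ, c*(v1^2+v2^2) ≤
      (-2*S)*v1^2 + 2*(4*T)*v1*v2 + (2*S+1/γ'^2)*v2^2 := by
    intro v1 v2
    have key : (-2*S - c) * (((-2*S)*v1^2 + 2*(4*T)*v1*v2 + (2*S+1/γ'^2)*v2^2) - c*(v1^2+v2^2))
        = ((-2*S - c)*v1 + 4*T*v2)^2 + c^2*v2^2 := by
      linear_combination (-(v2^2)) * hcAB
    nlinarith [key, hαc, sq_nonneg ((-2*S - c)*v1 + 4*T*v2), sq_nonneg v2, sq_nonneg c]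
  -- gradient vanishes at the critical point
  have hdne : ∀ i : Fin n, ((x i - ahat)^2 + γ'^2) ≠ 0 := fun i => by positivity
  have hGp : gradC n x w (ahat, γ') = (0, 0) := by
    have h1 : (∑ i, w i * ((2*(ahat - x i)) * (((x i - ahat)^2 + γ'^2)⁻¹))) = 0 := by
      have : (∑ i, w i * ((2*(ahat - x i)) * (((x i - ahat)^2 + γ'^2)⁻¹)))
          = -2 * ∑ i, w i * (x i - ahat) / ((x i - ahat)^2 + γ'^2) := by
        rw [Finset.mul_sum]
        refine Finset.sum_congr rfl fun i _ => ?_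
        rw [div_eq_mul_inv]; ring
      rw [this, hcrit_a]; ring
    have h2 : (∑ i, w i * ((2*γ') * (((x i - ahat)^2 + γ'^2)⁻¹))) - γ'⁻¹ = 0 := by
      have : (∑ i, w i * ((2*γ') * (((x i - ahat)^2 + γ'^2)⁻¹)))
          = (2/γ') * ∑ i, w i * γ'^2 / ((x i - ahat)^2 + γ'^2) := by
        rw [Finset.mul_sum]
        refine Finset.sum_congr rfl fun i _ => ?_
        have h0 := hdne i
        field_simp
      rw [this, hcrit_γ]
      field_simp
      ring
    simp only [gradC, Prod.mk.injEq]
    exact ⟨h1, h2⟩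
  -- the Hessian applied to a vector
  have hHv : ∀ v : ℝ × ℝ, hessC n x w ahat γ' v
      = ((-2*S)*v.1 + (4*T)*v.2, (4*T)*v.1 + (2*S+1/γ'^2)*v.2) := by
    intro v
    simp only [hessC, ← hSdef, ← hTdef, ContinuousLinearMap.prod_apply,
      ContinuousLinearMap.add_apply, ContinuousLinearMap.smul_apply,
      ContinuousLinearMap.coe_fst', ContinuousLinearMap.coe_snd', smul_eq_mul]
  -- little-o bound
  have hlo := (hasGrad n x w ahat γ' hγ').isLittleO
  rw [Asymptotics.isLittleO_iff] at hlo
  have hev := hlo (show (0:ℝ) < c/4 by positivity)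
  rw [Metric.eventually_nhds_iff] at hev
  obtain ⟨δ₁, hδ₁, hball⟩ := hev
  -- the inner-product estimate
  have hinner : ∀ u : ℝ × ℝ, ‖u‖ < δ₁ →
      (c/2)*‖u‖^2 ≤ (gradC n x w ((ahat, γ') + u)).1 * u.1
        + (gradC n x w ((ahat, γ') + u)).2 * u.2 := by
    intro u hu
    have hdball : dist ((ahat, γ') + u) (ahat, γ') < δ₁ := by
      rw [dist_eq_norm, add_sub_cancel_left]; exact hu
    have he := hball hdball
    rw [hGp, add_sub_cancel_left] at he
    set e : ℝ × ℝ := gradC n x w ((ahat, γ') + u) - (0,0) - hessC n x w ahat γ' u with hedef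
    have h1 : (gradC n x w ((ahat, γ') + u)).1 = ((-2*S)*u.1 + (4*T)*u.2) + e.1 := by
      rw [hedef]; simp [hHv u]
    have h2 : (gradC n x w ((ahat, γ') + u)).2 = ((4*T)*u.1 + (2*S+1/γ'^2)*u.2) + e.2 := by
      rw [hedef]; simp [hHv u]
    rw [h1, h2]
    have hne : ‖e‖ ≤ c/4 * ‖u‖ := he
    have he1 : |e.1| ≤ c/4 * ‖u‖ := le_trans (by rw [← Real.norm_eq_abs]; exact norm_fst_le e) hne
    have he2 : |e.2| ≤ c/4 * ‖u‖ := le_trans (by rw [← Real.norm_eq_abs]; exact norm_snd_le e) hne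
    have hu1 : |u.1| ≤ ‖u‖ := by rw [← Real.norm_eq_abs]; exact norm_fst_le u
    have hu2 : |u.2| ≤ ‖u‖ := by rw [← Real.norm_eq_abs]; exact norm_snd_le u
    have hE1 : -(c/4 * ‖u‖ * ‖u‖) ≤ e.1 * u.1 := by
      have habs : |e.1 * u.1| ≤ c/4 * ‖u‖ * ‖u‖ := by
        rw [abs_mul]
        exact mul_le_mul he1 hu1 (abs_nonneg _) (by positivity)
      linarith [neg_abs_le (e.1 * u.1)]
    have hE2 : -(c/4 * ‖u‖ * ‖u‖) ≤ e.2 * u.2 := by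
      have habs : |e.2 * u.2| ≤ c/4 * ‖u‖ * ‖u‖ := by
        rw [abs_mul]
        exact mul_le_mul he2 hu2 (abs_nonneg _) (by positivity)
      linarith [neg_abs_le (e.2 * u.2)]
    have hq := hQ u.1 u.2
    have hcn : c*‖u‖^2 ≤ c*(u.1^2+u.2^2) := mul_le_mul_of_nonneg_left (sqnorm_le u) hc.le
    nlinarith [hq, hcn, hE1, hE2]
  -- choose ε
  refine ⟨min δ₁ γ', lt_min hδ₁ hγ', ?_⟩
  intro a γ hdist hne
  have hvd : ((a, γ) : ℝ × ℝ) - (ahat, γ') = (a - ahat, γ - γ') := rfl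
  have hnv : ‖((a - ahat, γ - γ') : ℝ × ℝ)‖ < min δ₁ γ' := by
    rw [← hvd, ← dist_eq_norm]; exact hdist
  have hvpos : 0 < ‖((a - ahat, γ - γ') : ℝ × ℝ)‖ := by
    rw [norm_pos_iff]
    intro h
    apply hne
    have h1 : a - ahat = 0 := congrArg Prod.fst h
    have h2 : γ - γ' = 0 := congrArg Prod.snd h
    have e1 : a = ahat := by linarith
    have e2 : γ = γ' := by linarith
    rw [e1, e2]
  have hv2 : |γ - γ'| ≤ ‖((a - ahat, γ - γ') : ℝ × ℝ)‖ := by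
    rw [← Real.norm_eq_abs]; exact norm_snd_le ((a - ahat, γ - γ') : ℝ × ℝ)
  have hstep : ∀ t : ℝ, t ∈ Set.Icc (0:ℝ) 1 → 0 < γ' + t*(γ - γ') := by
    intro t ht
    have h1 : |t * (γ - γ')| ≤ |γ - γ'| := by
      rw [abs_mul]
      have : |t| ≤ 1 := abs_le.mpr ⟨by linarith [ht.1], ht.2⟩
      nlinarith [abs_nonneg (γ - γ')]
    have h2 : |γ - γ'| < γ' := lt_of_le_of_lt hv2 (lt_of_lt_of_le hnv (min_le_right _ _))
    have := neg_abs_le (t * (γ - γ'))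
    linarith
  have hψd : ∀ t : ℝ, t ∈ Set.Icc (0:ℝ) 1 →
      HasDerivAt (fun s => cauchyNLL n x w (ahat + s*(a - ahat)) (γ' + s*(γ - γ')))
        ((gradC n x w (ahat + t*(a - ahat), γ' + t*(γ - γ'))).1 * (a - ahat)
          + (gradC n x w (ahat + t*(a - ahat), γ' + t*(γ - γ'))).2 * (γ - γ')) t :=
    fun t ht => hasPsi n x w ahat γ' (a - ahat) (γ - γ') t (hstep t ht)
  have hcont : ContinuousOn (fun s => cauchyNLL n x w (ahat + s*(a - ahat)) (γ' + s*(γ - γ')))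
      (Set.Icc 0 1) := fun t ht => ((hψd t ht).continuousAt).continuousWithinAt
  have hderivpos : ∀ t ∈ interior (Set.Icc (0:ℝ) 1),
      0 < deriv (fun s => cauchyNLL n x w (ahat + s*(a - ahat)) (γ' + s*(γ - γ'))) t := by
    intro t ht
    rw [interior_Icc] at ht
    obtain ⟨ht0, ht1⟩ := ht
    rw [(hψd t ⟨ht0.le, ht1.le⟩).deriv]
    -- apply hinner with u = t • v
    have hu : ((ahat, γ') : ℝ × ℝ) + (t*(a - ahat), t*(γ - γ'))
        = (ahat + t*(a - ahat), γ' + t*(γ - γ')) := rfl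
    have hsm : ((t*(a - ahat), t*(γ - γ')) : ℝ × ℝ) = t • ((a - ahat, γ - γ') : ℝ × ℝ) := by
      simp [Prod.smul_mk, smul_eq_mul]
    have hnu : ‖((t*(a - ahat), t*(γ - γ')) : ℝ × ℝ)‖ = |t| * ‖((a - ahat, γ - γ') : ℝ × ℝ)‖ := by
      rw [hsm, norm_smul, Real.norm_eq_abs]
    have hnu' : ‖((t*(a - ahat), t*(γ - γ')) : ℝ × ℝ)‖ < δ₁ := by
      rw [hnu]
      have h1 : |t| ≤ 1 := abs_le.mpr ⟨by linarith, by linarith⟩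
      have h2 : ‖((a - ahat, γ - γ') : ℝ × ℝ)‖ < δ₁ := lt_of_lt_of_le hnv (min_le_left _ _)
      nlinarith [norm_nonneg ((a - ahat, γ - γ') : ℝ × ℝ)]
    have hin := hinner (t*(a - ahat), t*(γ - γ')) hnu'
    rw [hu] at hin
    have hexp : (gradC n x w (ahat + t*(a - ahat), γ' + t*(γ - γ'))).1 * (t*(a - ahat))
        + (gradC n x w (ahat + t*(a - ahat), γ' + t*(γ - γ'))).2 * (t*(γ - γ'))
        = t * ((gradC n x w (ahat + t*(a - ahat), γ' + t*(γ - γ'))).1 * (a - ahat)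
          + (gradC n x w (ahat + t*(a - ahat), γ' + t*(γ - γ'))).2 * (γ - γ')) := by ring
    have hnsq : ‖((t*(a - ahat), t*(γ - γ')) : ℝ × ℝ)‖^2
        = t^2 * ‖((a - ahat, γ - γ') : ℝ × ℝ)‖^2 := by
      rw [hnu]; rw [mul_pow, sq_abs]
    rw [hnsq, hexp] at hin
    -- hin : c/2 * (t^2 * ‖v‖^2) ≤ t * X; conclude 0 < X
    nlinarith [hin, hc, ht0, hvpos,
      mul_pos (mul_pos ht0 ht0) (mul_pos hvpos hvpos),
      mul_pos hc (mul_pos (mul_pos ht0 ht0) (mul_pos hvpos hvpos))]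
  have hmono := strictMonoOn_of_deriv_pos (convex_Icc (0:ℝ) 1) hcont hderivpos
  have hfinal := hmono (Set.left_mem_Icc.mpr zero_le_one) (Set.right_mem_Icc.mpr zero_le_one)
    zero_lt_one
  have h0 : ahat + 0*(a - ahat) = ahat := by ring
  have h0' : γ' + 0*(γ - γ') = γ' := by ring
  have h1 : ahat + 1*(a - ahat) = a := by ring
  have h1' : γ' + 1*(γ - γ') = γ := by ring
  simpa [h0, h0', h1, h1'] using hfinal

end AuxLemmas

/-- At any critical point `(ahat,γ̂)` with `γ̂ > 0` of the Cauchy negative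
log-likelihood, the Hessian determinant is strictly positive, and the critical
point is a strict local minimizer. -/
theorem hessian_det_pos_at_critical_point (n : ℕ) (hn : 3 ≤ n) (x : Fin n → ℝ)
    (hx : StrictMono x) (w : Fin n → ℝ) (hw : ∀ i, 0 < w i) (hwhalf : ∀ i, w i < 1 / 2)
    (hw1 : ∑ i, w i = 1) (ahat γ' : ℝ) (hγ' : 0 < γ')
    (hcrit_a : (∑ i, w i * (x i - ahat) / ((x i - ahat) ^ 2 + γ' ^ 2)) = 0)
    (hcrit_γ : (∑ i, w i * γ' ^ 2 / ((x i - ahat) ^ 2 + γ' ^ 2)) = 1 / 2) :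
    0 < (-2 * ∑ i, w i * ((x i - ahat) ^ 2 - γ' ^ 2) / ((x i - ahat) ^ 2 + γ' ^ 2) ^ 2) *
          (2 * (∑ i, w i * ((x i - ahat) ^ 2 - γ' ^ 2) / ((x i - ahat) ^ 2 + γ' ^ 2) ^ 2)
            + 1 / γ' ^ 2) -
        (4 * ∑ i, w i * (γ' * (x i - ahat)) / ((x i - ahat) ^ 2 + γ' ^ 2) ^ 2) ^ 2 ∧
    ∃ ε > 0, ∀ a γ : ℝ, dist (a, γ) (ahat, γ') < ε → (a, γ) ≠ (ahat, γ') →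
      cauchyNLL n x w ahat γ' < cauchyNLL n x w a γ := by
  have hdet := det_pos n hn x hx w hw hw1 ahat γ' hγ' hcrit_a hcrit_γ
  exact ⟨hdet, strict_local_min n x w ahat γ' hγ' hcrit_a hcrit_γ hdet⟩
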